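/- Let y, z : ℝ → ℝ be three times continuously differentiable with y''(s)² − z''(s)² > 0 for all s, set κ(s) = √(y''(s)² − z''(s)²) and τ(s) = (y''(s)·z'''(s) − y'''(s)·z''(s))/κ(s)², and let α_B(s) = B(s) = (1/κ(s))·(0, z''(s), y''(s)) be the binormal spherical representation of the admissible pseudo-Galilean curve α(s) = (s, y(s), z(s)). Then the pseudo-Galilean norm of B'(s) equals |τ(s)|; consequently the pseudo-Galilean arc length of α_B from 0 to s equals ∫₀ˢ |τ(u)| du, i.e., the arc length parameter s_B of α_B satisfies ds_B/ds = |τ(s)|. -/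

import Mathlib

/-- The pseudo-Galilean norm of a vector `(0, a, b)` is `√|a² − b²|`. -/
noncomputable def pgNorm (v : Fin 3 → ℝ) : ℝ := Real.sqrt |(v 1) ^ 2 - (v 2) ^ 2|

/-- The pseudo-Galilean norm of `B'(s)` equals `|τ(s)|`; consequently the
pseudo-Galilean arc length of the binormal spherical representation
`α_B = B` satisfies `s_B(s) = ∫₀ˢ |τ(u)| du`, i.e. `ds_B/ds = |τ(s)|`. -/
theorem pseudo_galilean_binormal_spherical_arclength
    (y z κ τ sB : ℝ → ℝ) (αB : ℝ → Fin 3 → ℝ)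
    (hy : ContDiff ℝ 3 y) (hz : ContDiff ℝ 3 z)
    (hadm : ∀ s, 0 < (deriv (deriv y) s) ^ 2 - (deriv (deriv z) s) ^ 2)
    (hκ : ∀ s, κ s = Real.sqrt ((deriv (deriv y) s) ^ 2 - (deriv (deriv z) s) ^ 2))
    (hτ : ∀ s, τ s =
      (deriv (deriv y) s * deriv (deriv (deriv z)) s
        - deriv (deriv (deriv y)) s * deriv (deriv z) s) / (κ s) ^ 2)
    (hαB : ∀ s, αB s = (κ s)⁻¹ • ![0, deriv (deriv z) s, deriv (deriv y) s])
    (hsB : ∀ s, sB s = ∫ u in (0:ℝ)..s, pgNorm (deriv αB u)) :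
    (∀ s, pgNorm (deriv αB s) = |τ s|) ∧
    (∀ s, sB s = ∫ u in (0:ℝ)..s, |τ u|) ∧
    (∀ s, HasDerivAt sB (|τ s|) s) := by
  set a := deriv (deriv y) with ha_def
  set b := deriv (deriv z) with hb_def
  have haC : ContDiff ℝ 1 a := by
    have h := hy.iterate_deriv' 1 2
    simpa [Function.iterate_succ, Function.iterate_zero, Function.comp] using h
  have hbC : ContDiff ℝ 1 b := by
    have h := hz.iterate_deriv' 1 2
    simpa [Function.iterate_succ, Function.iterate_zero, Function.comp] using h
  have hκpos : ∀ s, 0 < κ s := fun s => by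
    rw [hκ]; exact Real.sqrt_pos.mpr (hadm s)
  have hκ0 : ∀ s, κ s ≠ 0 := fun s => (hκpos s).ne'
  have hκsq : ∀ s, κ s ^ 2 = a s ^ 2 - b s ^ 2 := fun s => by
    rw [hκ]; exact Real.sq_sqrt (hadm s).le
  set W : ℝ → ℝ := fun s => a s * deriv b s - deriv a s * b s with hW_def
  have hfunκ : κ = fun u => Real.sqrt (a u ^ 2 - b u ^ 2) := funext hκ
  -- derivative of αB
  have hderiv : ∀ s, HasDerivAt αB
      (![0, a s * W s / κ s ^ 3, b s * W s / κ s ^ 3]) s := by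
    intro s
    have hda : HasDerivAt a (deriv a s) s :=
      ((haC.differentiable one_ne_zero) s).hasDerivAt
    have hdb : HasDerivAt b (deriv b s) s :=
      ((hbC.differentiable one_ne_zero) s).hasDerivAt
    have hq : HasDerivAt (fun u => a u ^ 2 - b u ^ 2)
        (2 * a s ^ 1 * deriv a s - 2 * b s ^ 1 * deriv b s) s := by
      have h1 := hda.fun_pow 2
      have h2 := hdb.fun_pow 2
      simpa using h1.fun_sub h2
    have hne : a s ^ 2 - b s ^ 2 ≠ 0 := (hadm s).ne'
    have hκd : HasDerivAt κ
        ((2 * a s ^ 1 * deriv a s - 2 * b s ^ 1 * deriv b s) / (2 * κ s)) s := by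
      rw [hfunκ]
      exact hq.sqrt hne
    have hinv := hκd.fun_inv (hκ0 s)
    have h2 := hκsq s
    have hc1 : HasDerivAt (fun u => (κ u)⁻¹ * b u)
        (a s * W s / κ s ^ 3) s := by
      have h := hinv.fun_mul hdb
      refine h.congr_deriv ?_; symm
      have hne' := hκ0 s
      field_simp
      ring_nf
      linear_combination (-deriv b s) * h2
    have hc2 : HasDerivAt (fun u => (κ u)⁻¹ * a u)
        (b s * W s / κ s ^ 3) s := by
      have h := hinv.fun_mul hda
      refine h.congr_deriv ?_; symm
      have hne' := hκ0 s
      field_simp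
      ring_nf
      linear_combination (-deriv a s) * h2
    have hfun : αB = fun u => (κ u)⁻¹ • ![0, b u, a u] := funext hαB
    rw [hfun]
    rw [hasDerivAt_pi]
    intro i
    fin_cases i
    · simpa using hasDerivAt_const s (0:ℝ)
    · simpa [smul_eq_mul] using hc1
    · simpa [smul_eq_mul] using hc2
  have hτW : ∀ s, τ s = W s / κ s ^ 2 := fun s => by rw [hτ]
  have part1 : ∀ s, pgNorm (deriv αB s) = |τ s| := by
    intro s
    rw [(hderiv s).deriv]
    have h2 := hκsq s
    rw [pgNorm]
    have hval : (![0, a s * W s / κ s ^ 3, b s * W s / κ s ^ 3] : Fin 3 → ℝ) 1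
        = a s * W s / κ s ^ 3 := rfl
    have hval2 : (![0, a s * W s / κ s ^ 3, b s * W s / κ s ^ 3] : Fin 3 → ℝ) 2
        = b s * W s / κ s ^ 3 := rfl
    rw [hval, hval2]
    have key : (a s * W s / κ s ^ 3) ^ 2 - (b s * W s / κ s ^ 3) ^ 2
        = (W s / κ s ^ 2) ^ 2 := by
      have hne := hκ0 s
      rw [div_pow, div_pow, div_pow, ← sub_div, mul_pow, mul_pow, ← sub_mul, ← h2]
      field_simp
    rw [key, abs_of_nonneg (sq_nonneg _), Real.sqrt_sq_eq_abs, hτW s]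
  have hτcont : Continuous τ := by
    have hfun : τ = fun s => W s / κ s ^ 2 := funext hτW
    rw [hfun]
    have hWc : Continuous W := by
      apply Continuous.sub
      · exact ((haC.continuous).mul (hbC.continuous_deriv le_rfl))
      · exact ((haC.continuous_deriv le_rfl).mul (hbC.continuous))
    have hκc : Continuous fun s => κ s ^ 2 := by
      have h : (fun s => κ s ^ 2) = fun s => a s ^ 2 - b s ^ 2 := funext hκsq
      rw [h]
      exact ((haC.continuous.pow 2).sub (hbC.continuous.pow 2))
    exact hWc.div hκc fun s => (pow_pos (hκpos s) 2).ne'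
  have habs : Continuous fun s => |τ s| := hτcont.abs
  have part2 : ∀ s, sB s = ∫ u in (0:ℝ)..s, |τ u| := by
    intro s
    rw [hsB s]
    congr 1
    exact funext part1
  refine ⟨part1, part2, fun s => ?_⟩
  have hfun : sB = fun s => ∫ u in (0:ℝ)..s, |τ u| := funext part2
  rw [hfun]
  exact (habs.integral_hasStrictDerivAt 0 s).hasDerivAt
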